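/- Let S be an E-unitary inverse semigroup with finitely many idempotents. Then S has the Howson property if and only if its maximal group image S/σ has the Howson property. -/
import Mathlib

inductive InvGen {S : Type*} [Mul S] [Inv S] (X : Set S) : S → Prop
  | base {x : S} : x ∈ X → InvGen X x
  | mul {a b : S} : InvGen X a → InvGen X b → InvGen X (a * b)
  | inv {a : S} : InvGen X a → InvGen X a⁻¹

def IsInvSub {S : Type*} [Mul S] [Inv S] (T : Set S) : Prop :=
  (∀ a ∈ T, ∀ b ∈ T, a * b ∈ T) ∧ ∀ a ∈ T, a⁻¹ ∈ T

def InvFG {S : Type*} [Mul S] [Inv S] (T : Set S) : Prop :=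
  ∃ X : Finset S, ↑X ⊆ T ∧ T = {s | InvGen (↑X : Set S) s}

def Howson (S : Type*) [Mul S] [Inv S] : Prop :=
  ∀ U V : Set S, IsInvSub U → IsInvSub V → InvFG U → InvFG V → InvFG (U ∩ V)
class InverseSemigroup (S : Type*) extends Semigroup S, Inv S where
  mul_inv_mul : ∀ a : S, a * a⁻¹ * a = a
  inv_invol : ∀ a : S, a⁻¹⁻¹ = a
  idem_comm : ∀ a b : S, (a * a⁻¹) * (b * b⁻¹) = (b * b⁻¹) * (a * a⁻¹)
def HowsonGroup (G : Type*) [Group G] : Prop :=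
  ∀ H K : Subgroup G, H.FG → K.FG → (H ⊓ K).FG

section Basics
variable {S : Type*} [InverseSemigroup S]

lemma mim (a : S) : a * a⁻¹ * a = a := InverseSemigroup.mul_inv_mul a
lemma invol (a : S) : a⁻¹⁻¹ = a := InverseSemigroup.inv_invol a
lemma imi (a : S) : a⁻¹ * a * a⁻¹ = a⁻¹ := by
  have := mim a⁻¹; rwa [invol] at this
lemma comm0 (a b : S) : (a * a⁻¹) * (b * b⁻¹) = (b * b⁻¹) * (a * a⁻¹) :=
  InverseSemigroup.idem_comm a b

/-- assoc-normalized rewrite rules -/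
lemma R2 (a x : S) : a * (a⁻¹ * (a * x)) = a * x := by
  rw [← mul_assoc, ← mul_assoc, mim]
lemma R3 (a x : S) : a⁻¹ * (a * (a⁻¹ * x)) = a⁻¹ * x := by
  rw [← mul_assoc, ← mul_assoc, imi]
lemma R2t (a : S) : a * (a⁻¹ * a) = a := by rw [← mul_assoc, mim]
lemma R3t (a : S) : a⁻¹ * (a * a⁻¹) = a⁻¹ := by rw [← mul_assoc, imi]
lemma R1 (a b x : S) : a * (a⁻¹ * (b * (b⁻¹ * x))) = b * (b⁻¹ * (a * (a⁻¹ * x))) := by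
  have h := comm0 a b
  calc a * (a⁻¹ * (b * (b⁻¹ * x))) = ((a * a⁻¹) * (b * b⁻¹)) * x := by
        simp only [mul_assoc]
    _ = ((b * b⁻¹) * (a * a⁻¹)) * x := by rw [h]
    _ = b * (b⁻¹ * (a * (a⁻¹ * x))) := by simp only [mul_assoc]
lemma R1t (a b : S) : a * (a⁻¹ * (b * b⁻¹)) = b * (b⁻¹ * (a * a⁻¹)) := by
  have h := comm0 a b
  calc a * (a⁻¹ * (b * b⁻¹)) = (a * a⁻¹) * (b * b⁻¹) := by simp only [mul_assoc]
    _ = (b * b⁻¹) * (a * a⁻¹) := h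
    _ = b * (b⁻¹ * (a * a⁻¹)) := by simp only [mul_assoc]

lemma idem_mi (a : S) : (a * a⁻¹) * (a * a⁻¹) = a * a⁻¹ := by
  simp only [mul_assoc]; rw [R3t]
lemma idem_ii (a : S) : (a⁻¹ * a) * (a⁻¹ * a) = a⁻¹ * a := by
  simp only [mul_assoc]; rw [R2t]

lemma aux_idem (w : S) (hw : w * w = w) : w⁻¹ = (w⁻¹ * w) * (w * w⁻¹) := by
  have h1 : w⁻¹ * (w * w) * w⁻¹ = w⁻¹ := by rw [hw]; exact imi w
  calc w⁻¹ = w⁻¹ * (w * w) * w⁻¹ := h1.symm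
    _ = (w⁻¹ * w) * (w * w⁻¹) := by simp only [mul_assoc]

lemma inv_of_idem {w : S} (hw : w * w = w) : w⁻¹ = w := by
  have h1 := aux_idem w hw
  have hiw : w⁻¹ * w⁻¹ = w⁻¹ := by
    have hx : w * (w⁻¹ * (w⁻¹ * (w * (w * w⁻¹)))) = w⁻¹ * (w * (w * (w⁻¹ * (w * w⁻¹)))) := by
      have := R1 w w⁻¹ (w * w⁻¹); rwa [invol] at this
    conv_lhs => rw [h1]
    conv_rhs => rw [h1]
    simp only [mul_assoc]
    rw [hx, R3, R3t]
  have h2 := aux_idem w⁻¹ hiw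
  rw [invol] at h2
  have hc : (w⁻¹ * w) * (w * w⁻¹) = (w * w⁻¹) * (w⁻¹ * w) := by
    have := comm0 w⁻¹ w; rwa [invol] at this
  exact h1.trans (hc.trans h2.symm)

lemma idem_comm {e f : S} (he : e * e = e) (hf : f * f = f) : e * f = f * e := by
  have h := comm0 e f
  rwa [inv_of_idem he, inv_of_idem hf, he, hf] at h

lemma C1 {e f : S} (he : e * e = e) (hf : f * f = f) (x : S) :
    e * (f * x) = f * (e * x) := by
  rw [← mul_assoc, idem_comm he hf, mul_assoc]

lemma Cabs {e : S} (he : e * e = e) (x : S) : e * (e * x) = e * x := by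
  rw [← mul_assoc, he]

lemma idem_mul {e f : S} (he : e * e = e) (hf : f * f = f) :
    (e * f) * (e * f) = e * f := by
  calc (e * f) * (e * f) = e * (f * (e * f)) := by simp only [mul_assoc]
    _ = e * (e * (f * f)) := by rw [C1 hf he]
    _ = e * f := by rw [hf, Cabs he]

lemma invUnique {a u v : S} (h1 : a * u * a = a) (h2 : u * a * u = u)
    (h3 : a * v * a = a) (h4 : v * a * v = v) : u = v := by
  have hau : (a * u) * (a * u) = a * u := by rw [← mul_assoc, h1]
  have hav : (a * v) * (a * v) = a * v := by rw [← mul_assoc, h3]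
  have hua : (u * a) * (u * a) = u * a := by rw [← mul_assoc, h2]
  have hva : (v * a) * (v * a) = v * a := by rw [← mul_assoc, h4]
  have key1 : u = v * (a * u) := by
    calc u = u * a * u := h2.symm
      _ = u * (a * v * a) * u := by rw [h3]
      _ = (u * a) * ((v * a) * u) := by simp only [mul_assoc]
      _ = (v * a) * ((u * a) * u) := by
          rw [← mul_assoc, idem_comm hua hva, mul_assoc]
      _ = v * ((a * u) * (a * u)) := by simp only [mul_assoc]
      _ = v * (a * u) := by rw [hau]
  have key2 : v = v * (a * u) := by
    calc v = v * a * v := h4.symm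
      _ = v * (a * u * a) * v := by rw [h1]
      _ = v * ((a * u) * (a * v)) := by simp only [mul_assoc]
      _ = v * ((a * v) * (a * u)) := by rw [idem_comm hau hav]
      _ = (v * (a * v)) * (a * u) := by simp only [mul_assoc]
      _ = v * (a * u) := by rw [show v * (a * v) = v from by rw [← mul_assoc]; exact h4]
  exact key1.trans key2.symm

lemma mul_inv_rev' (a b : S) : (a * b)⁻¹ = b⁻¹ * a⁻¹ := by
  have h3 : (a * b) * (b⁻¹ * a⁻¹) * (a * b) = a * b := by
    calc (a * b) * (b⁻¹ * a⁻¹) * (a * b)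
        = a * (b * (b⁻¹ * (a⁻¹ * (a * b)))) := by simp only [mul_assoc]
      _ = a * (a⁻¹ * (a * (b * (b⁻¹ * b)))) := by
          rw [show b * (b⁻¹ * (a⁻¹ * (a * b))) = a⁻¹ * (a * (b * (b⁻¹ * b))) from by
            have := R1 b a⁻¹ b; rwa [invol] at this]
      _ = a * b := by rw [R2t b, R2]
  have h4 : (b⁻¹ * a⁻¹) * (a * b) * (b⁻¹ * a⁻¹) = b⁻¹ * a⁻¹ := by
    calc (b⁻¹ * a⁻¹) * (a * b) * (b⁻¹ * a⁻¹)
        = b⁻¹ * (a⁻¹ * (a * (b * (b⁻¹ * a⁻¹)))) := by simp only [mul_assoc]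
      _ = b⁻¹ * (b * (b⁻¹ * (a⁻¹ * (a * a⁻¹)))) := by
          rw [show a⁻¹ * (a * (b * (b⁻¹ * a⁻¹))) = b * (b⁻¹ * (a⁻¹ * (a * a⁻¹))) from by
            have := R1 a⁻¹ b a⁻¹; rwa [invol] at this]
      _ = b⁻¹ * a⁻¹ := by rw [R3t a, R3]
  exact invUnique (mim (a * b)) (imi (a * b)) h3 h4

lemma conj_idem {e : S} (he : e * e = e) (a : S) :
    (a * e * a⁻¹) * (a * e * a⁻¹) = a * e * a⁻¹ := by
  have hii := idem_ii a
  calc (a * e * a⁻¹) * (a * e * a⁻¹)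
      = a * (e * ((a⁻¹ * a) * (e * a⁻¹))) := by simp only [mul_assoc]
    _ = a * (e * (e * ((a⁻¹ * a) * a⁻¹))) := by rw [C1 hii he]
    _ = a * (e * ((a⁻¹ * a) * a⁻¹)) := by rw [Cabs he]
    _ = a * e * a⁻¹ := by rw [mul_assoc a⁻¹ a a⁻¹, R3t a]; simp only [mul_assoc]

end Basics
section FLemmas
variable {S : Type*} [InverseSemigroup S] {G : Type*} [Group G] {f : S → G}

lemma f_inv (hhom : ∀ a b : S, f (a * b) = f a * f b) (a : S) : f a⁻¹ = (f a)⁻¹ := by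
  have h := congrArg f (mim a)
  rw [hhom, hhom] at h
  have h2 : f a * f a⁻¹ = 1 := mul_right_cancel (h.trans (one_mul (f a)).symm)
  exact (inv_eq_of_mul_eq_one_right h2).symm

lemma f_idem_one (hhom : ∀ a b : S, f (a * b) = f a * f b) {e : S} (he : e * e = e) :
    f e = 1 := by
  have h := congrArg f he
  rw [hhom] at h
  exact mul_right_cancel (h.trans (one_mul (f e)).symm)

lemma f_one_idem
    (hEunitary : ∀ e s : S, e * e = e → (e * s) * (e * s) = e * s → s * s = s)
    (hhom : ∀ a b : S, f (a * b) = f a * f b)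
    (hker : ∀ a b : S, f a = f b ↔ ∃ e : S, e * e = e ∧ e * a = e * b)
    {x : S} (hx : f x = 1) : x * x = x := by
  have hxx : f x = f (x * x⁻¹) := by
    rw [hhom, f_inv hhom, hx]; simp
  obtain ⟨e, he, hex⟩ := (hker x (x * x⁻¹)).1 hxx
  have hidem : (e * x) * (e * x) = e * x := by
    rw [hex]; exact idem_mul he (idem_mi x)
  exact hEunitary e x he hidem

lemma f_inj
    (hEunitary : ∀ e s : S, e * e = e → (e * s) * (e * s) = e * s → s * s = s)
    (hhom : ∀ a b : S, f (a * b) = f a * f b)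
    (hker : ∀ a b : S, f a = f b ↔ ∃ e : S, e * e = e ∧ e * a = e * b)
    {s t : S} (h1 : f s = f t) (h2 : s * s⁻¹ = t * t⁻¹) : s = t := by
  have he : (s⁻¹ * t) * (s⁻¹ * t) = s⁻¹ * t := by
    apply f_one_idem hEunitary hhom hker
    rw [hhom, f_inv hhom, h1, inv_mul_cancel]
  have he' : (t⁻¹ * s) * (t⁻¹ * s) = t⁻¹ * s := by
    apply f_one_idem hEunitary hhom hker
    rw [hhom, f_inv hhom, h1, inv_mul_cancel]
  have ht : t = s * (s⁻¹ * t) := by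
    calc t = t * t⁻¹ * t := (mim t).symm
      _ = s * s⁻¹ * t := by rw [← h2]
      _ = s * (s⁻¹ * t) := mul_assoc _ _ _
  have hs : s = t * (t⁻¹ * s) := by
    calc s = s * s⁻¹ * s := (mim s).symm
      _ = t * t⁻¹ * s := by rw [h2]
      _ = t * (t⁻¹ * s) := mul_assoc _ _ _
  have hmix : s = s * ((s⁻¹ * t) * (t⁻¹ * s)) := by
    calc s = t * (t⁻¹ * s) := hs
      _ = (s * (s⁻¹ * t)) * (t⁻¹ * s) := by rw [← ht]
      _ = s * ((s⁻¹ * t) * (t⁻¹ * s)) := mul_assoc _ _ _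
  have se : s * (s⁻¹ * t) = s := by
    calc s * (s⁻¹ * t) = (s * ((s⁻¹ * t) * (t⁻¹ * s))) * (s⁻¹ * t) := by rw [← hmix]
      _ = s * ((s⁻¹ * t) * ((t⁻¹ * s) * (s⁻¹ * t))) := by simp only [mul_assoc]
      _ = s * ((s⁻¹ * t) * ((s⁻¹ * t) * (t⁻¹ * s))) := by rw [idem_comm he' he]
      _ = s * (((s⁻¹ * t) * (s⁻¹ * t)) * (t⁻¹ * s)) := by simp only [mul_assoc]
      _ = s * ((s⁻¹ * t) * (t⁻¹ * s)) := by rw [he]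
      _ = s := hmix.symm
  exact (ht.trans se).symm

end FLemmas

section ZLemmas
variable {S : Type*} [InverseSemigroup S]

lemma exists_z (hE : {e : S | e * e = e}.Finite) (hne : ∃ e : S, e * e = e) :
    ∃ z : S, z * z = z ∧ ∀ e : S, e * e = e → z * e = z := by
  classical
  suffices h : ∀ F : Finset S, (∀ x ∈ F, x * x = x) →
      ∃ z, z * z = z ∧ ∀ e ∈ F, z * e = z by
    obtain ⟨z, hz1, hz2⟩ := h hE.toFinset (fun x hx => (hE.mem_toFinset).1 hx)
    exact ⟨z, hz1, fun e he => hz2 e (hE.mem_toFinset.2 he)⟩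
  intro F
  induction F using Finset.induction_on with
  | empty => intro _; obtain ⟨e, he⟩ := hne; exact ⟨e, he, by simp⟩
  | @insert a F' ha ih =>
    intro hall
    obtain ⟨z', h1, h2⟩ := ih (fun x hx => hall x (Finset.mem_insert_of_mem hx))
    have haa : a * a = a := hall a (Finset.mem_insert_self a F')
    refine ⟨z' * a, idem_mul h1 haa, ?_⟩
    intro e he'
    rcases Finset.mem_insert.1 he' with rfl | hmem
    · rw [mul_assoc, haa]
    · calc (z' * a) * e = z' * (a * e) := mul_assoc _ _ _
        _ = z' * (e * a) := by rw [idem_comm haa (hall e (Finset.mem_insert_of_mem hmem))]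
        _ = (z' * e) * a := (mul_assoc _ _ _).symm
        _ = z' * a := by rw [h2 e hmem]

variable {z : S}

lemma z_conj (hz1 : z * z = z) (hz2 : ∀ e : S, e * e = e → z * e = z) (s : S) :
    s * z * s⁻¹ = z := by
  have ha : (s * z * s⁻¹) * (s * z * s⁻¹) = s * z * s⁻¹ := conj_idem hz1 s
  have hza : z * (s * z * s⁻¹) = z := hz2 _ ha
  have hkey : z * (s⁻¹ * z * s) = z := by
    have h := conj_idem hz1 s⁻¹
    rw [invol] at h
    exact hz2 _ h
  have haz : (s * z * s⁻¹) * z = s * z * s⁻¹ := by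
    calc (s * z * s⁻¹) * z = (s * z * s⁻¹) * (z * (s * s⁻¹)) := by rw [hz2 (s * s⁻¹) (idem_mi s)]
      _ = s * (z * (s⁻¹ * z * s)) * s⁻¹ := by simp only [mul_assoc]
      _ = s * z * s⁻¹ := by rw [hkey]
  calc s * z * s⁻¹ = (s * z * s⁻¹) * z := haz.symm
    _ = z * (s * z * s⁻¹) := idem_comm ha hz1
    _ = z := hza

lemma z_central (hz1 : z * z = z) (hz2 : ∀ e : S, e * e = e → z * e = z) (s : S) :
    s * z = z * s := by
  calc s * z = s * (z * (s⁻¹ * s)) := by rw [hz2 _ (idem_ii s)]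
    _ = (s * z * s⁻¹) * s := by simp only [mul_assoc]
    _ = z * s := by rw [z_conj hz1 hz2 s]

end ZLemmas
section Util
variable {S : Type*} [InverseSemigroup S]

lemma C2 {e : S} (he : e * e = e) (b x : S) : b * (b⁻¹ * (e * x)) = e * (b * (b⁻¹ * x)) := by
  calc b * (b⁻¹ * (e * x)) = ((b * b⁻¹) * e) * x := by simp only [mul_assoc]
    _ = (e * (b * b⁻¹)) * x := by rw [idem_comm (idem_mi b) he]
    _ = e * (b * (b⁻¹ * x)) := by simp only [mul_assoc]

lemma C2' {e : S} (he : e * e = e) (b x : S) : b⁻¹ * (b * (e * x)) = e * (b⁻¹ * (b * x)) := by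
  have := C2 he b⁻¹ x; rwa [invol] at this

lemma invGen_subset {X T : Set S} (hX : X ⊆ T) (hT : IsInvSub T) :
    ∀ s, InvGen X s → s ∈ T := by
  intro s h
  induction h with
  | base h => exact hX h
  | mul _ _ ih1 ih2 => exact hT.1 _ ih1 _ ih2
  | inv _ ih => exact hT.2 _ ih

lemma loop_mul1 {s t e : S} (hs2 : s⁻¹ * s = e) (ht1 : t * t⁻¹ = e) :
    (s * t) * (s * t)⁻¹ = s * s⁻¹ := by
  calc (s * t) * (s * t)⁻¹ = (s * t) * (t⁻¹ * s⁻¹) := by rw [mul_inv_rev']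
    _ = s * ((t * t⁻¹) * s⁻¹) := by simp only [mul_assoc]
    _ = s * ((s⁻¹ * s) * s⁻¹) := by rw [ht1, ← hs2]
    _ = s * (s⁻¹ * (s * s⁻¹)) := by simp only [mul_assoc]
    _ = s * s⁻¹ := by rw [R3t]

lemma loop_mul2 {s t e : S} (hs2 : s⁻¹ * s = e) (ht1 : t * t⁻¹ = e) :
    (s * t)⁻¹ * (s * t) = t⁻¹ * t := by
  calc (s * t)⁻¹ * (s * t) = (t⁻¹ * s⁻¹) * (s * t) := by rw [mul_inv_rev']
    _ = t⁻¹ * ((s⁻¹ * s) * t) := by simp only [mul_assoc]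
    _ = t⁻¹ * ((t * t⁻¹) * t) := by rw [hs2, ← ht1]
    _ = t⁻¹ * (t * (t⁻¹ * t)) := by simp only [mul_assoc]
    _ = t⁻¹ * t := by rw [R2t]

end Util

section VSet
variable {S : Type*} [InverseSemigroup S] {G : Type*} [Group G]

def vset (f : S → G) (T : Set S) (e : S) : Set G :=
  {g | ∃ t, t ∈ T ∧ t * t⁻¹ = e ∧ t⁻¹ * t = e ∧ f t = g}

variable {f : S → G}

lemma vset_one (hhom : ∀ a b : S, f (a * b) = f a * f b)
    {T : Set S} {e : S} (heT : e ∈ T) (hee : e * e = e) : (1 : G) ∈ vset f T e := by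
  refine ⟨e, heT, ?_, ?_, f_idem_one hhom hee⟩ <;> rw [inv_of_idem hee] <;> exact hee

lemma vset_mul {T : Set S} (hT : IsInvSub T) {e : S}
    (hhom : ∀ a b : S, f (a * b) = f a * f b)
    {g h : G} (hg : g ∈ vset f T e) (hh : h ∈ vset f T e) : g * h ∈ vset f T e := by
  obtain ⟨s, hsT, hs1, hs2, rfl⟩ := hg
  obtain ⟨t, htT, ht1, ht2, rfl⟩ := hh
  refine ⟨s * t, hT.1 _ hsT _ htT, ?_, ?_, (hhom s t)⟩
  · rw [loop_mul1 hs2 ht1, hs1]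
  · rw [loop_mul2 hs2 ht1, ht2]

lemma vset_inv {T : Set S} (hT : IsInvSub T) {e : S}
    (hhom : ∀ a b : S, f (a * b) = f a * f b)
    {g : G} (hg : g ∈ vset f T e) : g⁻¹ ∈ vset f T e := by
  obtain ⟨s, hsT, hs1, hs2, rfl⟩ := hg
  exact ⟨s⁻¹, hT.2 _ hsT, by rw [invol]; exact hs2, by rw [invol]; exact hs1, f_inv hhom s⟩

lemma invGen_map (hhom : ∀ a b : S, f (a * b) = f a * f b) {X : Set S} :
    ∀ s, InvGen X s → f s ∈ Subgroup.closure (f '' X) := by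
  intro s h
  induction h with
  | base h => exact Subgroup.subset_closure ⟨_, h, rfl⟩
  | mul _ _ ih1 ih2 => rw [hhom]; exact mul_mem ih1 ih2
  | inv _ ih => rw [f_inv hhom]; exact inv_mem ih

end VSet

inductive Chain {S : Type*} [Mul S] [Inv S] (A : Set S) : S → Prop
  | base {a} : a ∈ A → Chain A a
  | comp {a b} : Chain A a → Chain A b → a⁻¹ * a = b * b⁻¹ → Chain A (a * b)
  | inv {a} : Chain A a → Chain A a⁻¹
section GP
variable {S : Type*} [InverseSemigroup S]

def genArr (T X : Set S) : Set S :=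
  {a | ∃ u x v, u ∈ T ∧ u * u = u ∧ v ∈ T ∧ v * v = v ∧ (x ∈ X ∨ x⁻¹ ∈ X) ∧ a = u * x * v}

lemma genArr_subset {T X : Set S} (hT : IsInvSub T) (hX : X ⊆ T) : genArr T X ⊆ T := by
  rintro a ⟨u, x, v, huT, _, hvT, _, hx, rfl⟩
  have hxT : x ∈ T := by
    rcases hx with h | h
    · exact hX h
    · have := hT.2 _ (hX h); rwa [invol] at this
  exact hT.1 _ (hT.1 _ huT _ hxT) _ hvT

lemma genArr_finite {T : Set S} (hE : {e : S | e * e = e}.Finite) (X : Finset S) :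
    (genArr T ↑X).Finite := by
  have h1 : ((↑X : Set S) ∪ (fun s : S => s⁻¹) '' ↑X).Finite :=
    (X.finite_toSet).union ((X.finite_toSet).image _)
  have h2 : ({e : S | e * e = e} ×ˢ (((↑X : Set S) ∪ (fun s : S => s⁻¹) '' ↑X) ×ˢ
      {e : S | e * e = e})).Finite := hE.prod (h1.prod hE)
  refine (h2.image (fun p => p.1 * p.2.1 * p.2.2)).subset ?_
  rintro a ⟨u, x, v, huT, huu, hvT, hvv, hx, rfl⟩
  refine ⟨⟨u, x, v⟩, ⟨huu, ?_, hvv⟩, rfl⟩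
  rcases hx with h | h
  · exact Or.inl h
  · exact Or.inr ⟨x⁻¹, h, invol x⟩

lemma chain_subset {A T : Set S} (hA : A ⊆ T) (hT : IsInvSub T) :
    ∀ s, Chain A s → s ∈ T := by
  intro s h
  induction h with
  | base h => exact hA h
  | comp _ _ _ ih1 ih2 => exact hT.1 _ ih1 _ ih2
  | inv _ ih => exact hT.2 _ ih

lemma GPmul {a b j i i' j'' : S} (hj : j * j = j)
    (hii : i = b * j * b⁻¹) (hi' : i' = (a⁻¹ * a) * i) (hj'' : j'' = (b⁻¹ * i' * b) * j) :
    (a * i')⁻¹ * (a * i') = (b * j'') * (b * j'')⁻¹ ∧ (a * i') * (b * j'') = (a * b) * j := by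
  have hi_idem : i * i = i := by rw [hii]; exact conj_idem hj b
  have hi'_idem : i' * i' = i' := by rw [hi']; exact idem_mul (idem_ii a) hi_idem
  have hinn_idem : (b⁻¹ * i' * b) * (b⁻¹ * i' * b) = b⁻¹ * i' * b := by
    have := conj_idem hi'_idem b⁻¹; rwa [invol] at this
  have hj''_idem : j'' * j'' = j'' := by rw [hj'']; exact idem_mul hinn_idem hj
  have H1 : i' * (a⁻¹ * a) = i' := by
    rw [hi']
    calc ((a⁻¹ * a) * i) * (a⁻¹ * a) = (a⁻¹ * a) * (i * (a⁻¹ * a)) := mul_assoc _ _ _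
      _ = (a⁻¹ * a) * ((a⁻¹ * a) * i) := by rw [idem_comm hi_idem (idem_ii a)]
      _ = ((a⁻¹ * a) * (a⁻¹ * a)) * i := (mul_assoc _ _ _).symm
      _ = (a⁻¹ * a) * i := by rw [idem_ii]
  have H2 : i' * i = i' := by
    rw [hi']
    calc ((a⁻¹ * a) * i) * i = (a⁻¹ * a) * (i * i) := mul_assoc _ _ _
      _ = (a⁻¹ * a) * i := by rw [hi_idem]
  have H3 : (b * b⁻¹) * i = i := by
    rw [hii]
    calc (b * b⁻¹) * (b * j * b⁻¹) = b * (b⁻¹ * (b * (j * b⁻¹))) := by simp only [mul_assoc]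
      _ = b * (j * b⁻¹) := by rw [R2]
      _ = b * j * b⁻¹ := (mul_assoc _ _ _).symm
  have HL : (a * i')⁻¹ * (a * i') = i' := by
    calc (a * i')⁻¹ * (a * i') = (i' * a⁻¹) * (a * i') := by
          rw [mul_inv_rev', inv_of_idem hi'_idem]
      _ = (i' * (a⁻¹ * a)) * i' := by simp only [mul_assoc]
      _ = i' * i' := by rw [H1]
      _ = i' := hi'_idem
  have HR : (b * j'') * (b * j'')⁻¹ = i' := by
    calc (b * j'') * (b * j'')⁻¹ = (b * j'') * (j'' * b⁻¹) := by
          rw [mul_inv_rev', inv_of_idem hj''_idem]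
      _ = b * ((j'' * j'') * b⁻¹) := by simp only [mul_assoc]
      _ = b * (j'' * b⁻¹) := by rw [hj''_idem]
      _ = b * (((b⁻¹ * i' * b) * j) * b⁻¹) := by rw [hj'']
      _ = (b * b⁻¹) * (i' * (b * (j * b⁻¹))) := by simp only [mul_assoc]
      _ = (b * b⁻¹) * (i' * i) := by rw [show b * (j * b⁻¹) = i from by rw [hii, mul_assoc]]
      _ = (b * b⁻¹) * i' := by rw [H2]
      _ = i' := by
          rw [hi']
          calc (b * b⁻¹) * ((a⁻¹ * a) * i) = (a⁻¹ * a) * ((b * b⁻¹) * i) :=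
                C1 (idem_mi b) (idem_ii a) i
            _ = (a⁻¹ * a) * i := by rw [H3]
  refine ⟨HL.trans HR.symm, ?_⟩
  calc (a * i') * (b * j'') = (a * i') * (b * ((b⁻¹ * i' * b) * j)) := by rw [hj'']
    _ = a * (i' * (b * (b⁻¹ * (i' * (b * j))))) := by simp only [mul_assoc]
    _ = a * (i' * (i' * (b * (b⁻¹ * (b * j))))) := by rw [C2 hi'_idem b (b * j)]
    _ = a * (i' * (i' * (b * j))) := by rw [R2]
    _ = a * (i' * (b * j)) := by rw [Cabs hi'_idem]
    _ = a * (((a⁻¹ * a) * i) * (b * j)) := by rw [hi']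
    _ = a * (a⁻¹ * (a * (i * (b * j)))) := by simp only [mul_assoc]
    _ = a * (i * (b * j)) := by rw [R2]
    _ = a * (b * (j * (b⁻¹ * (b * j)))) := by rw [hii]; simp only [mul_assoc]
    _ = a * (b * (b⁻¹ * (b * (j * j)))) := by rw [← C2' hj b j]
    _ = a * (b * (j * j)) := by rw [R2]
    _ = (a * b) * j := by rw [hj, ← mul_assoc]

lemma GP {T X : Set S} (hT : IsInvSub T) (hX : X ⊆ T) :
    ∀ t, InvGen X t → ∀ j, j ∈ T → j * j = j → Chain (genArr T X) (t * j) := by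
  intro t ht
  induction ht with
  | @base x hx =>
    intro j hjT hj
    have hxT : x ∈ T := hX hx
    have huT : x * j * x⁻¹ ∈ T := hT.1 _ (hT.1 _ hxT _ hjT) _ (hT.2 _ hxT)
    have huu := conj_idem hj x
    have key : ((x * j * x⁻¹) * x) * j = x * j := by
      calc ((x * j * x⁻¹) * x) * j = x * (j * ((x⁻¹ * x) * j)) := by simp only [mul_assoc]
        _ = x * ((x⁻¹ * x) * (j * j)) := by rw [C1 hj (idem_ii x)]
        _ = x * ((x⁻¹ * x) * j) := by rw [hj]
        _ = (x * (x⁻¹ * x)) * j := by rw [← mul_assoc]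
        _ = x * j := by rw [R2t]
    rw [← key]
    exact Chain.base ⟨x * j * x⁻¹, x, j, huT, huu, hjT, hj, Or.inl hx, rfl⟩
  | @inv a ha ih =>
    intro j hjT hj
    have haT : a ∈ T := invGen_subset hX hT a ha
    have hj' : (a⁻¹ * j * a) * (a⁻¹ * j * a) = a⁻¹ * j * a := by
      have := conj_idem hj a⁻¹; rwa [invol] at this
    have hj'T : a⁻¹ * j * a ∈ T := hT.1 _ (hT.1 _ (hT.2 _ haT) _ hjT) _ haT
    have key : (a * (a⁻¹ * j * a))⁻¹ = a⁻¹ * j := by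
      calc (a * (a⁻¹ * j * a))⁻¹ = (a⁻¹ * j * a)⁻¹ * a⁻¹ := mul_inv_rev' _ _
        _ = (a⁻¹ * j * a) * a⁻¹ := by rw [inv_of_idem hj']
        _ = a⁻¹ * (j * (a * a⁻¹)) := by simp only [mul_assoc]
        _ = a⁻¹ * ((a * a⁻¹) * j) := by rw [idem_comm hj (idem_mi a)]
        _ = (a⁻¹ * (a * a⁻¹)) * j := by rw [← mul_assoc]
        _ = a⁻¹ * j := by rw [R3t]
    have := Chain.inv (ih _ hj'T hj')
    rwa [key] at this
  | @mul a b ha hb iha ihb =>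
    intro j hjT hj
    have haT : a ∈ T := invGen_subset hX hT a ha
    have hbT : b ∈ T := invGen_subset hX hT b hb
    have hiT : b * j * b⁻¹ ∈ T := hT.1 _ (hT.1 _ hbT _ hjT) _ (hT.2 _ hbT)
    have hi'T : (a⁻¹ * a) * (b * j * b⁻¹) ∈ T := hT.1 _ (hT.1 _ (hT.2 _ haT) _ haT) _ hiT
    have hj''T : (b⁻¹ * ((a⁻¹ * a) * (b * j * b⁻¹)) * b) * j ∈ T :=
      hT.1 _ (hT.1 _ (hT.1 _ (hT.2 _ hbT) _ hi'T) _ hbT) _ hjT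
    obtain ⟨hcomp, hprod⟩ := GPmul (a := a) (b := b) hj rfl rfl rfl
    have hi_idem : (b * j * b⁻¹) * (b * j * b⁻¹) = b * j * b⁻¹ := conj_idem hj b
    have hi'_idem := idem_mul (idem_ii a) hi_idem
    have hinn_idem : (b⁻¹ * ((a⁻¹ * a) * (b * j * b⁻¹)) * b) * (b⁻¹ * ((a⁻¹ * a) * (b * j * b⁻¹)) * b) = b⁻¹ * ((a⁻¹ * a) * (b * j * b⁻¹)) * b := by
      have := conj_idem hi'_idem b⁻¹; rwa [invol] at this
    have hj''_idem := idem_mul hinn_idem hj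
    have c1 := iha _ hi'T hi'_idem
    have c2 := ihb _ hj''T hj''_idem
    have := Chain.comp c1 c2 hcomp
    rwa [hprod] at this

lemma chain_of_mem {T : Set S} {X : Set S} (hT : IsInvSub T) (hX : X ⊆ T)
    {t : S} (ht : InvGen X t) : Chain (genArr T X) t := by
  have htT : t ∈ T := invGen_subset hX hT t ht
  have := GP hT hX t ht (t⁻¹ * t) (hT.1 _ (hT.2 _ htT) _ htT) (idem_ii t)
  rwa [R2t] at this

end GP
section Sandwich
variable {S : Type*} [InverseSemigroup S]

lemma sandwich {p a q e₀ : S} (hp1 : p * p⁻¹ = e₀) (hp2 : p⁻¹ * p = a * a⁻¹)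
    (hq2 : q⁻¹ * q = a⁻¹ * a) : (p * a * q⁻¹) * (p * a * q⁻¹)⁻¹ = e₀ := by
  calc (p * a * q⁻¹) * (p * a * q⁻¹)⁻¹ = (p * a * q⁻¹) * (q⁻¹⁻¹ * (p * a)⁻¹) := by
        rw [mul_inv_rev']
    _ = (p * a * q⁻¹) * (q * (a⁻¹ * p⁻¹)) := by rw [invol, mul_inv_rev']
    _ = p * (a * ((q⁻¹ * q) * (a⁻¹ * p⁻¹))) := by simp only [mul_assoc]
    _ = p * (a * ((a⁻¹ * a) * (a⁻¹ * p⁻¹))) := by rw [hq2]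
    _ = p * (a * (a⁻¹ * (a * (a⁻¹ * p⁻¹)))) := by simp only [mul_assoc]
    _ = p * (a * (a⁻¹ * p⁻¹)) := by rw [R2]
    _ = p * ((a * a⁻¹) * p⁻¹) := by rw [← mul_assoc a a⁻¹ p⁻¹]
    _ = p * ((p⁻¹ * p) * p⁻¹) := by rw [← hp2]
    _ = p * (p⁻¹ * (p * p⁻¹)) := by simp only [mul_assoc]
    _ = p * p⁻¹ := by rw [R3t]
    _ = e₀ := hp1

lemma sandwich2 {p a q e₀ : S} (hq1 : q * q⁻¹ = e₀) (hp2 : p⁻¹ * p = a * a⁻¹)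
    (hq2 : q⁻¹ * q = a⁻¹ * a) : (p * a * q⁻¹)⁻¹ * (p * a * q⁻¹) = e₀ := by
  have h1 : (p * a * q⁻¹)⁻¹ = q * a⁻¹ * p⁻¹ := by
    rw [mul_inv_rev', invol, mul_inv_rev', ← mul_assoc]
  have h2 : (q * a⁻¹ * p⁻¹)⁻¹ = p * a * q⁻¹ := by
    rw [mul_inv_rev', invol, mul_inv_rev', invol, ← mul_assoc]
  rw [h1, ← h2]
  exact sandwich hq1 (by rw [invol]; exact hq2) (by rw [invol]; exact hp2)

end Sandwich

section Step1
variable {S : Type*} [InverseSemigroup S] {G : Type*} [Group G] {f : S → G}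

lemma step1
    (hE : {e : S | e * e = e}.Finite)
    (hhom : ∀ a b : S, f (a * b) = f a * f b)
    {T : Set S} (hT : IsInvSub T) (X : Finset S) (hX : ↑X ⊆ T)
    (hTX : T = {s | InvGen (↑X : Set S) s})
    {e₀ : S} (he₀T : e₀ ∈ T) (he₀ : e₀ * e₀ = e₀) :
    ∃ Y : Set G, Y.Finite ∧ (Subgroup.closure Y : Set G) = vset f T e₀ := by
  classical
  set A : Set S := genArr T (↑X : Set S) with hA_def
  set Conn : Set S := {v | ∃ p, p ∈ T ∧ p * p⁻¹ = e₀ ∧ p⁻¹ * p = v} with hConn_def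
  set pth : S → S := fun v => if v = e₀ then e₀ else
    (if h : ∃ p, p ∈ T ∧ p * p⁻¹ = e₀ ∧ p⁻¹ * p = v then h.choose else e₀) with hpth_def
  have hpth0 : pth e₀ = e₀ := by simp only [hpth_def, if_pos rfl]
  have hpth : ∀ v, v ∈ Conn → pth v ∈ T ∧ (pth v) * (pth v)⁻¹ = e₀ ∧ (pth v)⁻¹ * (pth v) = v := by
    intro v hv
    by_cases hveq : v = e₀
    · subst hveq
      rw [hpth0]
      exact ⟨he₀T, by rw [inv_of_idem he₀]; exact he₀, by rw [inv_of_idem he₀]; exact he₀⟩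
    · have hex : ∃ p, p ∈ T ∧ p * p⁻¹ = e₀ ∧ p⁻¹ * p = v := hv
      simp only [hpth_def, if_neg hveq, dif_pos hex]
      exact hex.choose_spec
  have he₀Conn : e₀ ∈ Conn :=
    ⟨e₀, he₀T, by rw [inv_of_idem he₀]; exact he₀, by rw [inv_of_idem he₀]; exact he₀⟩
  set Agood : Set S := {a ∈ A | a * a⁻¹ ∈ Conn ∧ a⁻¹ * a ∈ Conn} with hAgood_def
  set Y : Set G := (fun a => f (pth (a * a⁻¹)) * f a * (f (pth (a⁻¹ * a)))⁻¹) '' Agood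
    with hY_def
  have hYfin : Y.Finite := (((genArr_finite hE X).subset (Set.sep_subset _ _)).image _)
  have hYv : Y ⊆ vset f T e₀ := by
    rintro g ⟨a, ⟨haA, hu, hv⟩, rfl⟩
    obtain ⟨hpT, hp1, hp2⟩ := hpth _ hu
    obtain ⟨hqT, hq1, hq2⟩ := hpth _ hv
    have haT : a ∈ T := genArr_subset hT hX haA
    refine ⟨pth (a * a⁻¹) * a * (pth (a⁻¹ * a))⁻¹,
      hT.1 _ (hT.1 _ hpT _ haT) _ (hT.2 _ hqT), sandwich hp1 hp2 hq2,
      sandwich2 hq1 hp2 hq2, ?_⟩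
    rw [hhom, hhom, f_inv hhom]
  have Φ : ∀ s, Chain A s → s * s⁻¹ ∈ Conn → s⁻¹ * s ∈ Conn →
      f (pth (s * s⁻¹)) * f s * (f (pth (s⁻¹ * s)))⁻¹ ∈ Subgroup.closure Y := by
    intro s hs
    induction hs with
    | @base a haA =>
      intro hu hv
      exact Subgroup.subset_closure ⟨a, ⟨haA, hu, hv⟩, rfl⟩
    | @comp a b hca hcb hab iha ihb =>
      intro hu hv
      have E1 : (a * b) * (a * b)⁻¹ = a * a⁻¹ := loop_mul1 hab rfl
      have E2 : (a * b)⁻¹ * (a * b) = b⁻¹ * b := loop_mul2 hab rfl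
      rw [E1] at hu
      rw [E2] at hv
      rw [E1, E2]
      have haT : a ∈ T := chain_subset (genArr_subset hT hX) hT a hca
      obtain ⟨hpT, hp1, hp2⟩ := hpth _ hu
      have hmConn : a⁻¹ * a ∈ Conn :=
        ⟨pth (a * a⁻¹) * a, hT.1 _ hpT _ haT, (loop_mul1 hp2 rfl).trans hp1, loop_mul2 hp2 rfl⟩
      have hbConn : b * b⁻¹ ∈ Conn := by rw [← hab]; exact hmConn
      have IH1 := iha hu hmConn
      have IH2 := ihb hbConn hv
      have heq : f (pth (a * a⁻¹)) * f (a * b) * (f (pth (b⁻¹ * b)))⁻¹ =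
          (f (pth (a * a⁻¹)) * f a * (f (pth (a⁻¹ * a)))⁻¹) *
          (f (pth (b * b⁻¹)) * f b * (f (pth (b⁻¹ * b)))⁻¹) := by
        rw [hhom, ← hab]
        group
      rw [heq]; exact mul_mem IH1 IH2
    | @inv a hca iha =>
      intro hu hv
      simp only [invol] at hu hv ⊢
      have IH := iha hv hu
      have heq : f (pth (a⁻¹ * a)) * f a⁻¹ * (f (pth (a * a⁻¹)))⁻¹ =
          (f (pth (a * a⁻¹)) * f a * (f (pth (a⁻¹ * a)))⁻¹)⁻¹ := by
        rw [f_inv hhom]; group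
      rw [heq]; exact inv_mem IH
  refine ⟨Y, hYfin, ?_⟩
  apply Set.Subset.antisymm
  · intro g hg
    refine Subgroup.closure_induction (k := Y) (p := fun g _ => g ∈ vset f T e₀)
      (fun x hx => hYv hx) (vset_one hhom he₀T he₀)
      (fun x y _ _ hx hy => vset_mul hT hhom hx hy)
      (fun x _ hx => vset_inv hT hhom hx) hg
  · rintro g ⟨t, htT, ht1, ht2, rfl⟩
    have hchain : Chain A t := chain_of_mem hT hX (by rw [hTX] at htT; exact htT)
    have := Φ t hchain (by rw [ht1]; exact he₀Conn) (by rw [ht2]; exact he₀Conn)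
    rw [ht1, ht2, hpth0, f_idem_one hhom he₀] at this
    simpa using this

end Step1
section Step2
variable {S : Type*} [InverseSemigroup S] {G : Type*} [Group G] {f : S → G}

lemma step2
    (hE : {e : S | e * e = e}.Finite)
    (hEunitary : ∀ e s : S, e * e = e → (e * s) * (e * s) = e * s → s * s = s)
    (hhom : ∀ a b : S, f (a * b) = f a * f b)
    (hker : ∀ a b : S, f a = f b ↔ ∃ e : S, e * e = e ∧ e * a = e * b)
    {T : Set S} (hT : IsInvSub T)
    (hfg : ∀ e, e ∈ T → e * e = e →
      ∃ Γ : Set G, Γ.Finite ∧ (Subgroup.closure Γ : Set G) = vset f T e) :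
    InvFG T := by
  classical
  set ET : Set S := {e | e ∈ T ∧ e * e = e} with hET_def
  have hETfin : ET.Finite := hE.subset (fun e he => he.2)
  set rep : S → S → S := fun u v =>
    if h : ∃ t, t ∈ T ∧ t * t⁻¹ = u ∧ t⁻¹ * t = v then h.choose else u with hrep_def
  set Rset : Set S := (fun p : S × S => rep p.1 p.2) '' (ET ×ˢ ET) with hRset_def
  have hRfin : Rset.Finite := (hETfin.prod hETfin).image _
  have hRT : Rset ⊆ T := by
    rintro r ⟨⟨u, v⟩, ⟨hu, hv⟩, rfl⟩
    simp only [hrep_def]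
    split_ifs with h
    · exact h.choose_spec.1
    · exact hu.1
  have hfg' : ∀ e : S, ∃ Γ : Set G, Γ.Finite ∧
      (e ∈ T → e * e = e → (Subgroup.closure Γ : Set G) = vset f T e) := by
    intro e
    by_cases h : e ∈ T ∧ e * e = e
    · obtain ⟨Γ, h1, h2⟩ := hfg e h.1 h.2
      exact ⟨Γ, h1, fun _ _ => h2⟩
    · exact ⟨∅, Set.finite_empty, fun h1 h2 => absurd ⟨h1, h2⟩ h⟩
  choose Γ hΓfin hΓeq using hfg'
  set pull : S → G → S := fun e g =>
    if h : ∃ t, t ∈ T ∧ t * t⁻¹ = e ∧ t⁻¹ * t = e ∧ f t = g then h.choose else e with hpull_def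
  set Yset : Set S := ⋃ e ∈ ET, (pull e) '' (Γ e) with hYset_def
  have hYfin : Yset.Finite := Set.Finite.biUnion hETfin (fun e _ => (hΓfin e).image _)
  have hYT : Yset ⊆ T := by
    intro w hw
    simp only [hYset_def, Set.mem_iUnion] at hw
    obtain ⟨e, he, g, hg, rfl⟩ := hw
    simp only [hpull_def]
    split_ifs with h
    · exact h.choose_spec.1
    · exact he.1
  set Xset : Set S := ET ∪ Rset ∪ Yset with hXset_def
  have hXfin : Xset.Finite := (hETfin.union hRfin).union hYfin
  have hXT : Xset ⊆ T := by
    rintro x (hx | hx)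
    · rcases hx with hx | hx
      · exact hx.1
      · exact hRT hx
    · exact hYT hx
  have hcoe : (↑(hXfin.toFinset) : Set S) = Xset := hXfin.coe_toFinset
  refine ⟨hXfin.toFinset, by rw [hcoe]; exact hXT, ?_⟩
  ext t
  simp only [Set.mem_setOf_eq]
  constructor
  · intro htT
    have hu : t * t⁻¹ ∈ ET := ⟨hT.1 _ htT _ (hT.2 _ htT), idem_mi t⟩
    have hv : t⁻¹ * t ∈ ET := ⟨hT.1 _ (hT.2 _ htT) _ htT, idem_ii t⟩
    have hrex : ∃ r, r ∈ T ∧ r * r⁻¹ = t * t⁻¹ ∧ r⁻¹ * r = t⁻¹ * t := ⟨t, htT, rfl, rfl⟩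
    have hrspec : rep (t * t⁻¹) (t⁻¹ * t) ∈ T ∧
        (rep (t * t⁻¹) (t⁻¹ * t)) * (rep (t * t⁻¹) (t⁻¹ * t))⁻¹ = t * t⁻¹ ∧
        (rep (t * t⁻¹) (t⁻¹ * t))⁻¹ * (rep (t * t⁻¹) (t⁻¹ * t)) = t⁻¹ * t := by
      simp only [hrep_def, dif_pos hrex]
      exact hrex.choose_spec
    set r := rep (t * t⁻¹) (t⁻¹ * t)
    have hrX : r ∈ Xset := Or.inl (Or.inr ⟨(t * t⁻¹, t⁻¹ * t), ⟨hu, hv⟩, rfl⟩)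
    have ht1' : r⁻¹ * r⁻¹⁻¹ = t⁻¹ * t := by rw [invol]; exact hrspec.2.2
    have hs1 : (t * r⁻¹) * (t * r⁻¹)⁻¹ = t * t⁻¹ := loop_mul1 rfl ht1'
    have hs2 : (t * r⁻¹)⁻¹ * (t * r⁻¹) = t * t⁻¹ := by
      have := loop_mul2 (rfl : t⁻¹ * t = t⁻¹ * t) ht1'
      rw [invol] at this
      exact this.trans hrspec.2.1
    have hsT : t * r⁻¹ ∈ T := hT.1 _ htT _ (hT.2 _ hrspec.1)
    have hsv : f (t * r⁻¹) ∈ vset f T (t * t⁻¹) := ⟨t * r⁻¹, hsT, hs1, hs2, rfl⟩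
    rw [← hΓeq _ hu.1 hu.2] at hsv
    have ExD : ∀ g, g ∈ Subgroup.closure (Γ (t * t⁻¹)) →
        ∃ w, w ∈ T ∧ w * w⁻¹ = t * t⁻¹ ∧ w⁻¹ * w = t * t⁻¹ ∧ f w = g ∧
          InvGen (↑(hXfin.toFinset) : Set S) w := by
      intro g hg
      refine Subgroup.closure_induction
        (p := fun g _ => ∃ w, w ∈ T ∧ w * w⁻¹ = t * t⁻¹ ∧ w⁻¹ * w = t * t⁻¹ ∧ f w = g ∧
          InvGen (↑(hXfin.toFinset) : Set S) w) ?_ ?_ ?_ ?_ hg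
      · intro γ hγ
        have hγv : γ ∈ vset f T (t * t⁻¹) := by
          have h1 : γ ∈ (Subgroup.closure (Γ (t * t⁻¹)) : Set G) := Subgroup.subset_closure hγ
          rwa [hΓeq _ hu.1 hu.2] at h1
        have hspec : pull (t * t⁻¹) γ ∈ T ∧ (pull (t * t⁻¹) γ) * (pull (t * t⁻¹) γ)⁻¹ = t * t⁻¹ ∧
            (pull (t * t⁻¹) γ)⁻¹ * (pull (t * t⁻¹) γ) = t * t⁻¹ ∧ f (pull (t * t⁻¹) γ) = γ := by
          have hγv' : ∃ t', t' ∈ T ∧ t' * t'⁻¹ = t * t⁻¹ ∧ t'⁻¹ * t' = t * t⁻¹ ∧ f t' = γ := hγv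
          simp only [hpull_def, dif_pos hγv']
          exact hγv'.choose_spec
        refine ⟨pull (t * t⁻¹) γ, hspec.1, hspec.2.1, hspec.2.2.1, hspec.2.2.2, ?_⟩
        refine InvGen.base ?_
        rw [hcoe]
        exact Or.inr (Set.mem_biUnion hu ⟨γ, hγ, rfl⟩)
      · refine ⟨t * t⁻¹, hu.1, ?_, ?_, f_idem_one hhom hu.2, ?_⟩
        · rw [inv_of_idem hu.2]; exact hu.2
        · rw [inv_of_idem hu.2]; exact hu.2
        · exact InvGen.base (by rw [hcoe]; exact Or.inl (Or.inl hu))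
      · rintro x y _ _ ⟨w1, hw1T, h11, h12, hfw1, hg1⟩ ⟨w2, hw2T, h21, h22, hfw2, hg2⟩
        refine ⟨w1 * w2, hT.1 _ hw1T _ hw2T, ?_, ?_, by rw [hhom, hfw1, hfw2], InvGen.mul hg1 hg2⟩
        · exact (loop_mul1 h12 h21).trans h11
        · exact (loop_mul2 h12 h21).trans h22
      · rintro x _ ⟨w, hwT, h1, h2, hfw, hg1⟩
        refine ⟨w⁻¹, hT.2 _ hwT, ?_, ?_, by rw [f_inv hhom, hfw], InvGen.inv hg1⟩
        · rw [invol]; exact h2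
        · rw [invol]; exact h1
    obtain ⟨w, hwT, hw1, hw2, hfw, hwX⟩ := ExD _ hsv
    have hws : w = t * r⁻¹ := f_inj hEunitary hhom hker hfw (hw1.trans hs1.symm)
    have key : (t * r⁻¹) * r = t := by
      calc (t * r⁻¹) * r = t * (r⁻¹ * r) := mul_assoc _ _ _
        _ = t * (t⁻¹ * t) := by rw [hrspec.2.2]
        _ = t := R2t t
    rw [← key]
    exact InvGen.mul (hws ▸ hwX) (InvGen.base (by rw [hcoe]; exact hrX))
  · intro h
    exact invGen_subset (by rw [hcoe]; exact hXT) hT t h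

end Step2
theorem stmt_5 {S : Type*} [InverseSemigroup S]
    (hE : {e : S | e * e = e}.Finite)
    (hEunitary : ∀ e s : S, e * e = e → (e * s) * (e * s) = e * s → s * s = s)
    (G : Type*) [Group G] (f : S → G)
    (hhom : ∀ a b : S, f (a * b) = f a * f b)
    (hsurj : Function.Surjective f)
    (hker : ∀ a b : S, f a = f b ↔ ∃ e : S, e * e = e ∧ e * a = e * b) :
    Howson S ↔ HowsonGroup G := by
  classical
  constructor
  · -- Howson S → HowsonGroup G
    intro hHS H K hH hK
    obtain ⟨s₀, hs₀⟩ := hsurj 1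
    have hne : ∃ e : S, e * e = e := ⟨s₀ * s₀⁻¹, idem_mi s₀⟩
    obtain ⟨z, hz1, hz2⟩ := exists_z hE hne
    have hzc := z_central hz1 hz2
    have hfz : f z = 1 := f_idem_one hhom hz1
    set pre : G → S := fun g => (hsurj g).choose with hpre_def
    have hpre : ∀ g, f (pre g) = g := fun g => (hsurj g).choose_spec
    have hzleft : ∀ w : S, (z * w) * (z * w)⁻¹ = z := by
      intro w
      calc (z * w) * (z * w)⁻¹ = (z * w) * (w⁻¹ * z) := by rw [mul_inv_rev', inv_of_idem hz1]
        _ = z * ((w * w⁻¹) * z) := by simp only [mul_assoc]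
        _ = z * (z * (w * w⁻¹)) := by rw [idem_comm (idem_mi w) hz1]
        _ = (z * z) * (w * w⁻¹) := by rw [← mul_assoc]
        _ = z * (w * w⁻¹) := by rw [hz1]
        _ = z := hz2 _ (idem_mi w)
    have hzinj : ∀ w w' : S, f w = f w' → z * w = z * w' := by
      intro w w' h
      exact f_inj hEunitary hhom hker (by rw [hhom, hhom, h])
        ((hzleft w).trans (hzleft w').symm)
    have hzinv : ∀ w : S, (z * w)⁻¹ = z * w⁻¹ := by
      intro w
      rw [mul_inv_rev', inv_of_idem hz1]
      exact hzc w⁻¹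
    have hsub : ∀ (H : Subgroup G), IsInvSub {s | ∃ x, f x ∈ H ∧ s = z * x} := by
      intro H
      constructor
      · rintro a ⟨x, hx, rfl⟩ b ⟨y, hy, rfl⟩
        refine ⟨x * (z * y), ?_, by simp only [mul_assoc]⟩
        rw [hhom, hhom, hfz, one_mul]
        exact mul_mem hx hy
      · rintro a ⟨x, hx, rfl⟩
        exact ⟨x⁻¹, by rw [f_inv hhom]; exact inv_mem hx, hzinv x⟩
    have hfgU : ∀ (H : Subgroup G), H.FG → InvFG {s | ∃ x, f x ∈ H ∧ s = z * x} := by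
      intro H hHfg
      obtain ⟨ΓH, hΓH⟩ := hHfg
      set XU : Finset S := insert z (ΓH.image (fun g => z * pre g)) with hXU_def
      have hXUsub : (↑XU : Set S) ⊆ {s | ∃ x, f x ∈ H ∧ s = z * x} := by
        intro w hw
        simp only [hXU_def, Finset.coe_insert, Set.mem_insert_iff, Finset.coe_image,
          Set.mem_image, Finset.mem_coe] at hw
        rcases hw with hw1 | ⟨γ, hγ, rfl⟩
        · exact ⟨z, by rw [hfz]; exact one_mem H, by rw [hw1, hz1]⟩
        · refine ⟨pre γ, ?_, rfl⟩
          rw [hpre, ← hΓH]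
          exact Subgroup.subset_closure hγ
      refine ⟨XU, hXUsub, ?_⟩
      ext s
      simp only [Set.mem_setOf_eq]
      constructor
      · rintro ⟨x, hx, rfl⟩
        rw [← hΓH] at hx
        have ExD : ∀ g, g ∈ Subgroup.closure (↑ΓH : Set G) →
            ∃ w : S, f w = g ∧ InvGen (↑XU : Set S) (z * w) := by
          intro g hg
          refine Subgroup.closure_induction
            (p := fun g _ => ∃ w : S, f w = g ∧ InvGen (↑XU : Set S) (z * w)) ?_ ?_ ?_ ?_ hg
          · intro γ hγ
            refine ⟨pre γ, hpre γ, InvGen.base ?_⟩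
            simp only [hXU_def, Finset.coe_insert, Set.mem_insert_iff, Finset.coe_image,
              Set.mem_image, Finset.mem_coe]
            exact Or.inr ⟨γ, hγ, rfl⟩
          · refine ⟨z, hfz, ?_⟩
            rw [hz1]
            exact InvGen.base (by simp [hXU_def])
          · rintro x y _ _ ⟨w1, hf1, hg1⟩ ⟨w2, hf2, hg2⟩
            refine ⟨w1 * (z * w2), ?_, ?_⟩
            · rw [hhom, hhom, hfz, one_mul, hf1, hf2]
            · have heq : (z * w1) * (z * w2) = z * (w1 * (z * w2)) := by simp only [mul_assoc]
              rw [← heq]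
              exact InvGen.mul hg1 hg2
          · rintro x _ ⟨w, hfw, hgw⟩
            refine ⟨w⁻¹, by rw [f_inv hhom, hfw], ?_⟩
            rw [← hzinv w]
            exact InvGen.inv hgw
        obtain ⟨w, hfw, hgw⟩ := ExD _ hx
        rwa [hzinj w x hfw] at hgw
      · intro h
        exact invGen_subset hXUsub (hsub H) s h
    obtain ⟨XW, hXWsub, hXWeq⟩ := hHS _ _ (hsub H) (hsub K) (hfgU H hH) (hfgU K hK)
    refine (Subgroup.fg_iff _).2 ⟨f '' ↑XW, ?_, (XW.finite_toSet).image f⟩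
    apply le_antisymm
    · rw [Subgroup.closure_le]
      rintro g ⟨x, hx, rfl⟩
      have hx' := hXWsub hx
      obtain ⟨⟨x1, hx1, he1⟩, ⟨x2, hx2, he2⟩⟩ := hx'
      rw [SetLike.mem_coe, Subgroup.mem_inf]
      constructor
      · rw [he1, hhom, hfz, one_mul]; exact hx1
      · rw [he2, hhom, hfz, one_mul]; exact hx2
    · intro g hg
      rw [Subgroup.mem_inf] at hg
      have hsW : z * pre g ∈ ({s | ∃ x, f x ∈ H ∧ s = z * x} ∩ {s | ∃ x, f x ∈ K ∧ s = z * x}) :=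
        ⟨⟨pre g, by rw [hpre]; exact hg.1, rfl⟩, ⟨pre g, by rw [hpre]; exact hg.2, rfl⟩⟩
      rw [hXWeq] at hsW
      have hmap := invGen_map hhom _ hsW
      rwa [hhom, hfz, one_mul, hpre] at hmap
  · -- HowsonGroup G → Howson S
    intro hHG U V hU hV hUfg hVfg
    have hW : IsInvSub (U ∩ V) :=
      ⟨fun a ha b hb => ⟨hU.1 a ha.1 b hb.1, hV.1 a ha.2 b hb.2⟩,
       fun a ha => ⟨hU.2 a ha.1, hV.2 a ha.2⟩⟩
    apply step2 hE hEunitary hhom hker hW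
    intro e heW hee
    obtain ⟨XU, hXU, hUX⟩ := hUfg
    obtain ⟨XV, hXV, hVX⟩ := hVfg
    obtain ⟨YU, hYUfin, hYUeq⟩ := step1 hE hhom hU XU hXU hUX heW.1 hee
    obtain ⟨YV, hYVfin, hYVeq⟩ := step1 hE hhom hV XV hXV hVX heW.2 hee
    have hvint : vset f (U ∩ V) e = vset f U e ∩ vset f V e := by
      apply Set.Subset.antisymm
      · rintro g ⟨s, hsW, h1, h2, rfl⟩
        exact ⟨⟨s, hsW.1, h1, h2, rfl⟩, ⟨s, hsW.2, h1, h2, rfl⟩⟩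
      · rintro g ⟨⟨s, hsU, hs1, hs2, rfl⟩, ⟨w, hwV, hw1, hw2, hfw⟩⟩
        have hws : w = s := f_inj hEunitary hhom hker hfw (hw1.trans hs1.symm)
        exact ⟨s, ⟨hsU, hws ▸ hwV⟩, hs1, hs2, rfl⟩
    have hFGU : (Subgroup.closure YU).FG := (Subgroup.fg_iff _).2 ⟨YU, rfl, hYUfin⟩
    have hFGV : (Subgroup.closure YV).FG := (Subgroup.fg_iff _).2 ⟨YV, rfl, hYVfin⟩
    obtain ⟨Γ', hΓ'⟩ := hHG _ _ hFGU hFGV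
    refine ⟨↑Γ', Γ'.finite_toSet, ?_⟩
    rw [hΓ', hvint, ← hYUeq, ← hYVeq]
    exact Subgroup.coe_inf _ _
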